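/- For every continuous conical concave function Ψ : E → ℝ there exists a sequence {Ψ_n} of rational polytopal support functions with Ψ_n(x) ≤ Ψ_{n+1}(x) ≤ Ψ(x) for all n and x, such that Ψ_n → Ψ in the C-norm. In particular, rational polytopal support functions are dense in the cone of conical concave functions with respect to the C-norm. -/

import Mathlib

open Set

noncomputable section

/-- `f` is conical: positively homogeneous of degree 1. -/
def Conical (d : ℕ) (f : EuclideanSpace ℝ (Fin d) → ℝ) : Prop :=
  ∀ c : ℝ, 0 ≤ c → ∀ x, f (c • x) = c * f x

/-- The rational point of `ℝ^d` with coordinates `q`. -/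
noncomputable def ratToE (d : ℕ) (q : Fin d → ℚ) : EuclideanSpace ℝ (Fin d) :=
  (WithLp.equiv 2 (Fin d → ℝ)).symm fun i => (q i : ℝ)

/-- `g` is a rational polytopal support function: `g(x) = min_{s ∈ S} ⟪s, x⟫` for some
finite nonempty set `S` of rational points. -/
def IsRatPolySupp (d : ℕ) (g : EuclideanSpace ℝ (Fin d) → ℝ) : Prop :=
  ∃ S : Finset (Fin d → ℚ), ∃ hS : S.Nonempty,
    ∀ x, g x = S.inf' hS fun q => (inner ℝ (ratToE d q) x : ℝ)

theorem aux_support (d : ℕ) (Ψ : EuclideanSpace ℝ (Fin d) → ℝ)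
    (hcon : Conical d Ψ) (hΨ0 : Ψ 0 = 0)
    (hsup : ∀ x y, Ψ x + Ψ y ≤ Ψ (x + y)) (x₀ : EuclideanSpace ℝ (Fin d)) :
    ∃ s : EuclideanSpace ℝ (Fin d), (∀ x, Ψ x ≤ inner ℝ s x) ∧ (inner ℝ s x₀ : ℝ) = Ψ x₀ := by
  set N : EuclideanSpace ℝ (Fin d) → ℝ := fun x => -Ψ x with hN
  have N_hom : ∀ c : ℝ, 0 < c → ∀ x, N (c • x) = c * N x := by
    intro c hc x
    simp only [N]
    rw [hcon c hc.le x]; ring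
  have N_add : ∀ x y, N (x + y) ≤ N x + N y := by
    intro x y
    simp only [N]
    linarith [hsup x y]
  have hneg : ∀ x : EuclideanSpace ℝ (Fin d), Ψ x + Ψ (-x) ≤ 0 := by
    intro x
    have := hsup x (-x)
    rwa [add_neg_cancel, hΨ0] at this
  have conv : ∀ g : EuclideanSpace ℝ (Fin d) →ₗ[ℝ] ℝ, (∀ x, g x ≤ N x) →
      ∃ s : EuclideanSpace ℝ (Fin d), (∀ x, Ψ x ≤ inner ℝ s x) ∧ ∀ x, (inner ℝ s x : ℝ) = -g x := by
    intro g hg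
    have hsx : ∀ x, (inner ℝ (-((InnerProductSpace.toDual ℝ (EuclideanSpace ℝ (Fin d))).symm
        (LinearMap.toContinuousLinearMap g))) x : ℝ) = -g x := by
      intro x
      rw [inner_neg_left, InnerProductSpace.toDual_symm_apply]
      simp
    refine ⟨_, fun x => ?_, hsx⟩
    rw [hsx x]
    have := hg x
    simp only [N] at this
    linarith
  rcases eq_or_ne x₀ 0 with rfl | hx₀
  · have hf : ∀ x : (⟨⊥, 0⟩ : EuclideanSpace ℝ (Fin d) →ₗ.[ℝ] ℝ).domain,
        (⟨⊥, 0⟩ : EuclideanSpace ℝ (Fin d) →ₗ.[ℝ] ℝ) x ≤ N x := by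
      rintro ⟨x, hx⟩
      have hx0 : x = 0 := by simpa using hx
      subst hx0
      simp [N, hΨ0]
    obtain ⟨g, _, hg2⟩ := exists_extension_of_le_sublinear ⟨⊥, 0⟩ N N_hom N_add hf
    obtain ⟨s, hs1, hs2⟩ := conv g hg2
    refine ⟨s, hs1, ?_⟩
    rw [inner_zero_right, hΨ0]
  · set f := LinearPMap.mkSpanSingleton (K := ℝ) (L := ℝ) (σ := RingHom.id ℝ) x₀ (-Ψ x₀) hx₀ with hf_def
    have hf : ∀ y : f.domain, f y ≤ N y := by
      rintro ⟨y, hy⟩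
      obtain ⟨c, hc⟩ := Submodule.mem_span_singleton.mp hy
      subst hc
      have happ : f ⟨c • x₀, hy⟩ = c • (-Ψ x₀) := LinearPMap.mkSpanSingleton'_apply _ _ _ c _
      rw [happ]
      rcases le_or_gt 0 c with hc0 | hc0
      · have : N (c • x₀) = c * N x₀ := by
          simp only [N]
          rw [hcon c hc0 x₀]; ring
        rw [this]
        simp only [N, smul_eq_mul]
        linarith
      · have h1 : c • x₀ = (-c) • (-x₀) := by rw [smul_neg, neg_smul, neg_neg]
        have h2 : N (c • x₀) = (-c) * (-Ψ (-x₀)) := by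
          rw [h1]
          simp only [N]
          rw [hcon (-c) (by linarith) (-x₀)]
          ring
        rw [h2]
        have h3 := hneg x₀
        simp only [smul_eq_mul]
        nlinarith
    obtain ⟨g, hg1, hg2⟩ := exists_extension_of_le_sublinear f N N_hom N_add hf
    obtain ⟨s, hs1, hs2⟩ := conv g hg2
    refine ⟨s, hs1, ?_⟩
    have hx₀mem : x₀ ∈ f.domain := by
      rw [hf_def]
      exact Submodule.mem_span_singleton_self x₀
    have hgx := hg1 ⟨x₀, hx₀mem⟩
    have happ : f ⟨x₀, hx₀mem⟩ = -Ψ x₀ := LinearPMap.mkSpanSingleton'_apply_self _ _ _ _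
    rw [happ] at hgx
    rw [hs2 x₀, hgx]
    ring

/-- Rational polytopal support functions are dense from below, monotonically, in the cone
of continuous conical concave functions with respect to the C-norm. -/
theorem stmt_15 (d : ℕ) (hd : 1 ≤ d)
    (Ψ : EuclideanSpace ℝ (Fin d) → ℝ)
    (hc : Continuous Ψ) (hcon : Conical d Ψ) (hcv : ConcaveOn ℝ Set.univ Ψ) :
    ∃ Ψn : ℕ → EuclideanSpace ℝ (Fin d) → ℝ,
      (∀ n, IsRatPolySupp d (Ψn n)) ∧
      (∀ n x, Ψn n x ≤ Ψn (n + 1) x) ∧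
      (∀ n x, Ψn n x ≤ Ψ x) ∧
      (∀ ε : ℝ, 0 < ε → ∃ N : ℕ, ∀ n ≥ N, ∀ x, |Ψn n x - Ψ x| ≤ ε * ‖x‖) := by
  classical
  have hΨ0 : Ψ 0 = 0 := by
    have h := hcon 0 le_rfl 0
    simpa using h
  -- superadditivity
  have hsup : ∀ x y, Ψ x + Ψ y ≤ Ψ (x + y) := by
    intro x y
    have h1 := hcv.2 (mem_univ x) (mem_univ y)
      (by norm_num : (0:ℝ) ≤ 1/2) (by norm_num : (0:ℝ) ≤ 1/2) (by norm_num : (1:ℝ)/2 + 1/2 = 1)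
    have h2 := hcon 2 (by norm_num) ((1/2:ℝ) • x + (1/2:ℝ) • y)
    have h3 : (2:ℝ) • ((1/2:ℝ) • x + (1/2:ℝ) • y) = x + y := by
      rw [smul_add, smul_smul, smul_smul]
      norm_num
    rw [h3] at h2
    simp only [smul_eq_mul] at h1
    linarith
  -- support points
  have key := aux_support d Ψ hcon hΨ0 hsup
  -- the inner product formula
  have hinner : ∀ (q : Fin d → ℚ) (x : EuclideanSpace ℝ (Fin d)),
      (inner ℝ (ratToE d q) x : ℝ) = ∑ i, (q i : ℝ) * x i := by
    intro q x
    simp [ratToE, PiLp.inner_apply, RCLike.inner_apply, mul_comm]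
  have hinnerE : ∀ (s x : EuclideanSpace ℝ (Fin d)),
      (inner ℝ s x : ℝ) = ∑ i, s i * x i := by
    intro s x
    simp [PiLp.inner_apply, RCLike.inner_apply, mul_comm]
  -- coordinate bound
  have habs : ∀ (y : EuclideanSpace ℝ (Fin d)) (i : Fin d), |y i| ≤ ‖y‖ := by
    intro y i
    rw [EuclideanSpace.norm_eq]
    calc |y i| = Real.sqrt (|y i| ^ 2) := by rw [Real.sqrt_sq (abs_nonneg _)]
      _ ≤ _ := by
        apply Real.sqrt_le_sqrt
        rw [sq_abs]
        have : y i ^ 2 = ‖y i‖ ^ 2 := by rw [Real.norm_eq_abs, sq_abs]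
        rw [this]
        exact Finset.single_le_sum (fun j _ => sq_nonneg ‖y j‖) (Finset.mem_univ i)
  -- global bound L
  obtain ⟨L0, hL0⟩ := (isCompact_closedBall (0 : EuclideanSpace ℝ (Fin d)) 1).exists_bound_of_continuousOn hc.continuousOn
  set L := max L0 0 with hLdef
  have hLnn : 0 ≤ L := le_max_right _ _
  have hLb : ∀ x : EuclideanSpace ℝ (Fin d), |Ψ x| ≤ L * ‖x‖ := by
    intro x
    rcases eq_or_ne x 0 with rfl | hx
    · simp [hΨ0]
    · have hx' : 0 < ‖x‖ := norm_pos_iff.mpr hx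
      have h1 : ‖x‖⁻¹ • x ∈ Metric.closedBall (0 : EuclideanSpace ℝ (Fin d)) 1 := by
        simp only [Metric.mem_closedBall, dist_zero_right, norm_smul, norm_inv, norm_norm]
        rw [inv_mul_cancel₀ hx'.ne']
      have h2 := hL0 _ h1
      rw [hcon ‖x‖⁻¹ (inv_nonneg.mpr hx'.le) x] at h2
      rw [Real.norm_eq_abs, abs_mul, abs_of_nonneg (inv_nonneg.mpr hx'.le)] at h2
      have h4 : |Ψ x| ≤ L0 * ‖x‖ := by
        rw [← mul_le_mul_iff_right₀ (inv_pos.mpr hx')]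
        calc ‖x‖⁻¹ * |Ψ x| ≤ L0 := h2
          _ = ‖x‖⁻¹ * (L0 * ‖x‖) := by field_simp
      exact h4.trans (mul_le_mul_of_nonneg_right (le_max_left _ _) hx'.le)
  -- the supergradient set
  set C : Set (EuclideanSpace ℝ (Fin d)) := {s | ∀ x, Ψ x ≤ inner ℝ s x} with hCdef
  have hCb : ∀ s ∈ C, ∀ i, |s i| ≤ L := by
    intro s hs i
    have h1 : Ψ (-s) ≤ inner ℝ s (-s) := hs (-s)
    rw [inner_neg_right] at h1
    have h2 : (inner ℝ s s : ℝ) = ‖s‖ ^ 2 := real_inner_self_eq_norm_sq s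
    have h3 : -(L * ‖s‖) ≤ Ψ (-s) := by
      have := hLb (-s)
      rw [norm_neg] at this
      cases abs_le.mp this
      linarith
    have h4 : ‖s‖ ≤ L := by nlinarith [norm_nonneg s]
    exact (habs s i).trans h4
  -- integer bound
  set B : ℕ := ⌈L⌉₊ + 2 with hBdef
  have hBL : L + 2 ≤ (B : ℝ) := by
    have := Nat.le_ceil L
    push_cast [hBdef]
    linarith
  -- grid finsets
  set P : ℕ → (Fin d → ℚ) → Prop := fun n q => ∃ s ∈ C, ∀ i, |(q i : ℝ) - s i| ≤ 2 / 2 ^ n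
    with hPdef
  set Q : ℕ → Finset (Fin d → ℚ) := fun n =>
    ((Finset.Icc (fun _ => (-(B * 2 ^ n : ℤ))) fun _ => (B * 2 ^ n : ℤ)).image
      fun k i => (k i : ℚ) / 2 ^ n).filter (P n) with hQdef
  have hmemP : ∀ n q, q ∈ Q n → P n q := by
    intro n q hq
    exact (Finset.mem_filter.mp hq).2
  have hmemQ : ∀ n (k : Fin d → ℤ), (∀ i, |k i| ≤ B * 2 ^ n) →
      P n (fun i => (k i : ℚ) / 2 ^ n) → (fun i => (k i : ℚ) / 2 ^ n) ∈ Q n := by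
    intro n k hk hP
    refine Finset.mem_filter.mpr ⟨Finset.mem_image.mpr ⟨k, ?_, rfl⟩, hP⟩
    rw [Finset.mem_Icc]
    constructor <;> (intro i; have := abs_le.mp (hk i))
    · exact this.1
    · exact this.2
  -- the rounding lemma
  have round : ∀ (n : ℕ) (x : EuclideanSpace ℝ (Fin d)) (v : Fin d → ℝ) (s : EuclideanSpace ℝ (Fin d)),
      s ∈ C → (∀ i, |v i - s i| ≤ 1 / 2 ^ n) →
      ∃ q ∈ Q n, (∀ i, |(q i : ℝ) - v i| ≤ 1 / 2 ^ n) ∧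
        ∑ i, (q i : ℝ) * x i ≤ ∑ i, v i * x i := by
    intro n x v s hs hv
    have h2n : (0:ℝ) < 2 ^ n := by positivity
    have h2n1 : (1:ℝ) ≤ 2 ^ n := one_le_pow₀ one_le_two
    set k : Fin d → ℤ := fun i => if 0 ≤ x i then ⌊v i * 2 ^ n⌋ else ⌈v i * 2 ^ n⌉ with hkdef
    set q : Fin d → ℚ := fun i => (k i : ℚ) / 2 ^ n with hqdef
    have hqcast : ∀ i, (q i : ℝ) = (k i : ℝ) / 2 ^ n := by
      intro i
      simp only [q]
      push_cast
      ring
    have hk1 : ∀ i, |(k i : ℝ) - v i * 2 ^ n| ≤ 1 := by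
      intro i
      simp only [k]
      split_ifs
      · rw [abs_le]
        constructor
        · linarith [Int.sub_one_lt_floor (v i * 2 ^ n)]
        · linarith [Int.floor_le (v i * 2 ^ n)]
      · rw [abs_le]
        constructor
        · linarith [Int.le_ceil (v i * 2 ^ n)]
        · linarith [Int.ceil_lt_add_one (v i * 2 ^ n)]
    have hq1 : ∀ i, |(q i : ℝ) - v i| ≤ 1 / 2 ^ n := by
      intro i
      rw [hqcast i]
      have : (k i : ℝ) / 2 ^ n - v i = ((k i : ℝ) - v i * 2 ^ n) / 2 ^ n := by field_simp
      rw [this, abs_div, abs_of_pos h2n]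
      exact div_le_div_of_nonneg_right (hk1 i) h2n.le
    have hq2 : ∀ i, (q i : ℝ) * x i ≤ v i * x i := by
      intro i
      rw [hqcast i]
      simp only [k]
      split_ifs with hxi
      · apply mul_le_mul_of_nonneg_right _ hxi
        rw [div_le_iff₀ h2n]
        exact Int.floor_le (v i * 2 ^ n)
      · apply mul_le_mul_of_nonpos_right _ (le_of_not_ge hxi)
        rw [le_div_iff₀ h2n]
        exact Int.le_ceil (v i * 2 ^ n)
    have hkb : ∀ i, |k i| ≤ B * 2 ^ n := by
      intro i
      have h1 : |v i| ≤ L + 1 := by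
        have := hCb s hs i
        have h2 := hv i
        have : |v i| ≤ |s i| + 1 / 2 ^ n := by
          have := abs_sub_abs_le_abs_sub (v i) (s i)
          linarith [hv i]
        have h3 : 1 / 2 ^ n ≤ (1:ℝ) := by
          rw [div_le_one h2n]; exact h2n1
        linarith [hCb s hs i]
      have h2 : |(k i : ℝ)| ≤ (B : ℝ) * 2 ^ n := by
        have := hk1 i
        have h3 : |(k i : ℝ)| ≤ |v i * 2 ^ n| + 1 := by
          have := abs_sub_abs_le_abs_sub ((k i : ℝ)) (v i * 2 ^ n)
          linarith [hk1 i]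
        rw [abs_mul, abs_of_pos h2n] at h3
        have h4 : |v i| * 2 ^ n + 1 ≤ (L + 1) * 2 ^ n + 1 :=
          by nlinarith
        have h5 : (L + 1) * 2 ^ n + 1 ≤ (L + 2) * 2 ^ n := by nlinarith
        have h6 : (L + 2) * 2 ^ n ≤ (B : ℝ) * 2 ^ n := by nlinarith
        linarith
      have : ((|k i| : ℤ) : ℝ) ≤ ((B * 2 ^ n : ℤ) : ℝ) := by
        push_cast
        rw [← Int.cast_abs] at h2  -- maybe unnecessary
        push_cast at h2
        exact h2
      exact_mod_cast this
    have hPq : P n q := by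
      refine ⟨s, hs, fun i => ?_⟩
      calc |(q i : ℝ) - s i| ≤ |(q i : ℝ) - v i| + |v i - s i| := abs_sub_le _ _ _
        _ ≤ 1 / 2 ^ n + 1 / 2 ^ n := add_le_add (hq1 i) (hv i)
        _ = 2 / 2 ^ n := by ring
    exact ⟨q, hmemQ n k hkb hPq, hq1, Finset.sum_le_sum fun i _ => hq2 i⟩
  -- nonemptiness
  have hQne : ∀ n, (Q n).Nonempty := by
    intro n
    obtain ⟨s, hs, -⟩ := key 0
    have hsC : s ∈ C := hs
    obtain ⟨q, hq, -, -⟩ := round n 0 (fun i => s i) s hsC (by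
      intro i
      simp only [sub_self, abs_zero]
      positivity)
    exact ⟨q, hq⟩
  -- the approximants
  refine ⟨fun n x => (Q n).inf' (hQne n) fun q => (inner ℝ (ratToE d q) x : ℝ), ?_, ?_, ?_, ?_⟩
  · intro n
    exact ⟨Q n, hQne n, fun x => rfl⟩
  · -- monotone
    intro n x
    apply Finset.le_inf'
    intro q hq
    obtain ⟨s, hs, hqs⟩ := hmemP (n + 1) q hq
    have hqs' : ∀ i, |(q i : ℝ) - s i| ≤ 1 / 2 ^ n := by
      intro i
      have h1 : (2:ℝ) / 2 ^ (n+1) = 1 / 2 ^ n := by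
        rw [pow_succ]
        ring
      rw [← h1]
      exact hqs i
    obtain ⟨q', hq', -, hsum⟩ := round n x (fun i => (q i : ℝ)) s hs hqs'
    calc (Q n).inf' (hQne n) (fun q => (inner ℝ (ratToE d q) x : ℝ))
        ≤ (inner ℝ (ratToE d q') x : ℝ) := Finset.inf'_le _ hq'
      _ = ∑ i, (q' i : ℝ) * x i := hinner q' x
      _ ≤ ∑ i, (q i : ℝ) * x i := hsum
      _ = (inner ℝ (ratToE d q) x : ℝ) := (hinner q x).symm
  · -- below Ψ
    intro n x
    obtain ⟨s, hs, hsx⟩ := key x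
    obtain ⟨q, hq, -, hsum⟩ := round n x (fun i => s i) s hs (by
      intro i
      simp only [sub_self, abs_zero]
      positivity)
    calc (Q n).inf' (hQne n) (fun q => (inner ℝ (ratToE d q) x : ℝ))
        ≤ (inner ℝ (ratToE d q) x : ℝ) := Finset.inf'_le _ hq
      _ = ∑ i, (q i : ℝ) * x i := hinner q x
      _ ≤ ∑ i, s i * x i := hsum
      _ = (inner ℝ s x : ℝ) := (hinnerE s x).symm
      _ = Ψ x := hsx
  · -- convergence
    intro ε hε
    obtain ⟨N, hN⟩ := pow_unbounded_of_one_lt (2 * (d : ℝ) / ε) (one_lt_two)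
    refine ⟨N, fun n hn x => ?_⟩
    have h2n : (0:ℝ) < 2 ^ n := by positivity
    have hcn : 2 * (d : ℝ) / 2 ^ n ≤ ε := by
      have h1 : (2:ℝ) ^ N ≤ 2 ^ n := pow_le_pow_right₀ one_le_two hn
      have h2 : 2 * (d : ℝ) / ε < 2 ^ n := lt_of_lt_of_le hN h1
      rw [div_lt_iff₀ hε] at h2
      rw [div_le_iff₀ h2n]
      nlinarith
    -- upper bound : Ψn ≤ Ψ (from previous part, re-derive)
    have hub : (Q n).inf' (hQne n) (fun q => (inner ℝ (ratToE d q) x : ℝ)) ≤ Ψ x := by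
      obtain ⟨s, hs, hsx⟩ := key x
      obtain ⟨q, hq, -, hsum⟩ := round n x (fun i => s i) s hs (by
        intro i
        simp only [sub_self, abs_zero]
        positivity)
      calc (Q n).inf' (hQne n) (fun q => (inner ℝ (ratToE d q) x : ℝ))
          ≤ (inner ℝ (ratToE d q) x : ℝ) := Finset.inf'_le _ hq
        _ = ∑ i, (q i : ℝ) * x i := hinner q x
        _ ≤ ∑ i, s i * x i := hsum
        _ = (inner ℝ s x : ℝ) := (hinnerE s x).symm
        _ = Ψ x := hsx
    have hlb : Ψ x - 2 * (d : ℝ) / 2 ^ n * ‖x‖ ≤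
        (Q n).inf' (hQne n) (fun q => (inner ℝ (ratToE d q) x : ℝ)) := by
      apply Finset.le_inf'
      intro q hq
      obtain ⟨s, hs, hqs⟩ := hmemP n q hq
      have h1 : (inner ℝ (ratToE d q) x : ℝ) = (inner ℝ s x : ℝ) + ∑ i, ((q i : ℝ) - s i) * x i := by
        rw [hinner, hinnerE, ← Finset.sum_add_distrib]
        congr 1
        ext i
        ring
      have h2 : |∑ i, ((q i : ℝ) - s i) * x i| ≤ 2 / 2 ^ n * ((d:ℝ) * ‖x‖) := by
        calc |∑ i, ((q i : ℝ) - s i) * x i| ≤ ∑ i, |((q i : ℝ) - s i) * x i| :=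
              Finset.abs_sum_le_sum_abs _ _
          _ ≤ ∑ i : Fin d, 2 / 2 ^ n * ‖x‖ := by
              apply Finset.sum_le_sum
              intro i _
              rw [abs_mul]
              have := habs x i
              have := hqs i
              have h2nn : (0:ℝ) ≤ 2 / 2^n := by positivity
              nlinarith [abs_nonneg (x i), abs_nonneg ((q i : ℝ) - s i)]
          _ = (d : ℝ) * (2 / 2 ^ n * ‖x‖) := by
              rw [Finset.sum_const, Finset.card_univ, Fintype.card_fin]
              simp [nsmul_eq_mul]
          _ = 2 / 2 ^ n * ((d:ℝ) * ‖x‖) := by ring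
      have h3 : Ψ x ≤ (inner ℝ s x : ℝ) := hs x
      have h4 : 2 / 2 ^ n * ((d:ℝ) * ‖x‖) = 2 * (d : ℝ) / 2 ^ n * ‖x‖ := by ring
      cases abs_le.mp h2
      linarith
    have hnorm : 2 * (d : ℝ) / 2 ^ n * ‖x‖ ≤ ε * ‖x‖ :=
      mul_le_mul_of_nonneg_right hcn (norm_nonneg x)
    rw [abs_le]
    constructor <;> [skip; skip] <;> linarith
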